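/- arXiv:1504.06122 — 2 statements merged into one kernel-verified Lean document; each statement's English description precedes it below -/
import Mathlib

section
/- Let 0 < ε ≤ 1/2, let X ∈ ℝ^{n×d} have full column rank d, let Y ∈ ℝⁿ, and let Π ∈ ℝ^{k×n} be an (ε/3)-subspace embedding for the column space of the augmented matrix [X,Y] ∈ ℝ^{n×(d+1)}. Let γ ∈ ℝᵈ be a minimizer of β ↦ ‖Xβ − Y‖² and let ν ∈ ℝᵈ be a minimizer of β ↦ ‖Π(Xβ − Y)‖². Then ‖γ − ν‖² ≤ (ε² / σ_min(X)²)·‖Xγ − Y‖², where σ_min(X) denotes the smallest singular value of X. -/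
open Matrix

noncomputable section

/-- Squared Euclidean norm of a vector. -/
def sqNorm {ι : Type*} [Fintype ι] (v : ι → ℝ) : ℝ := ∑ i, (v i) ^ 2

/-- `P` is an `ε`-subspace embedding for the column space of `A`:
for all `x`, `(1-ε)‖Ax‖² ≤ ‖PAx‖² ≤ (1+ε)‖Ax‖²`. -/
def IsSubspaceEmbedding {K N C : Type*} [Fintype K] [Fintype N] [Fintype C]
    (P : Matrix K N ℝ) (A : Matrix N C ℝ) (ε : ℝ) : Prop :=
  ∀ x : C → ℝ,
    (1 - ε) * sqNorm (A.mulVec x) ≤ sqNorm ((P * A).mulVec x) ∧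
      sqNorm ((P * A).mulVec x) ≤ (1 + ε) * sqNorm (A.mulVec x)

/-- The augmented matrix `[X, Y]` obtained by appending the column `Y` to `X`. -/
def augment {n d : ℕ} (X : Matrix (Fin n) (Fin d) ℝ) (Y : Fin n → ℝ) :
    Matrix (Fin n) (Fin (d + 1)) ℝ :=
  Matrix.of fun i => Fin.snoc (X i) (Y i)

/-- The squared smallest singular value of `M`: `σ_min(M)² = inf_{‖x‖ = 1} ‖Mx‖²`. -/
def sigMinSq {N C : Type*} [Fintype N] [Fintype C] (M : Matrix N C ℝ) : ℝ :=
  sInf {r : ℝ | ∃ x : C → ℝ, sqNorm x = 1 ∧ r = sqNorm (M.mulVec x)}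

def dotR {ι : Type*} [Fintype ι] (v w : ι → ℝ) : ℝ := ∑ i, v i * w i

lemma sqNorm_nonneg {ι : Type*} [Fintype ι] (v : ι → ℝ) : 0 ≤ sqNorm v :=
  Finset.sum_nonneg fun _ _ => sq_nonneg _

lemma sqNorm_expand {ι : Type*} [Fintype ι] (u v : ι → ℝ) (a b : ℝ) :
    sqNorm (a • u + b • v) = a^2 * sqNorm u + 2*a*b* dotR u v + b^2 * sqNorm v := by
  simp only [sqNorm, dotR, Finset.mul_sum, ← Finset.sum_add_distrib, Pi.add_apply,
    Pi.smul_apply, smul_eq_mul]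
  exact Finset.sum_congr rfl fun i _ => by ring

lemma sqNorm_smul {ι : Type*} [Fintype ι] (v : ι → ℝ) (a : ℝ) :
    sqNorm (a • v) = a^2 * sqNorm v := by
  simp only [sqNorm, Finset.mul_sum, Pi.smul_apply, smul_eq_mul]
  exact Finset.sum_congr rfl fun i _ => by ring

lemma quad_lin_zero {a b : ℝ} (ha : 0 ≤ a) (h : ∀ t : ℝ, 0 ≤ a * t^2 + b * t) : b = 0 := by
  have h1 := h (-b / (a + 1))
  have hpos : (0:ℝ) < a + 1 := by linarith
  have key : a * (-b / (a + 1))^2 + b * (-b / (a + 1)) = -b^2 / (a + 1)^2 := by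
    field_simp; ring
  rw [key] at h1
  have hb2 : b^2 ≤ 0 := by
    by_contra hc
    push_neg at hc
    have : -b^2 / (a+1)^2 < 0 := div_neg_of_neg_of_pos (by linarith) (by positivity)
    linarith
  nlinarith [sq_nonneg b]

lemma augment_mulVec {n d : ℕ} (X : Matrix (Fin n) (Fin d) ℝ) (Y : Fin n → ℝ)
    (v : Fin d → ℝ) (c : ℝ) :
    (augment X Y).mulVec (Fin.snoc v c) = X.mulVec v + c • Y := by
  funext i
  simp only [augment, mulVec, dotProduct, Pi.add_apply, Pi.smul_apply, smul_eq_mul,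
    Matrix.of_apply, Fin.sum_univ_castSucc, Fin.snoc_castSucc, Fin.snoc_last]
  ring

lemma sqNorm_eq_zero_iff {ι : Type*} [Fintype ι] {v : ι → ℝ} : sqNorm v = 0 ↔ v = 0 := by
  constructor
  · intro h
    funext i
    have := (Finset.sum_eq_zero_iff_of_nonneg (fun i _ => sq_nonneg (v i))).mp h i
      (Finset.mem_univ i)
    exact pow_eq_zero_iff (by norm_num) |>.mp this
  · intro h; subst h; simp [sqNorm]

lemma sigMinSq_nonneg {N C : Type*} [Fintype N] [Fintype C] (M : Matrix N C ℝ) :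
    0 ≤ sigMinSq M := by
  apply Real.sInf_nonneg
  rintro r ⟨x, -, rfl⟩
  exact sqNorm_nonneg _

lemma sigMinSq_le {N C : Type*} [Fintype N] [Fintype C] (M : Matrix N C ℝ)
    {u : C → ℝ} (hu : u ≠ 0) :
    sigMinSq M * sqNorm u ≤ sqNorm (M.mulVec u) := by
  have hs : 0 < sqNorm u := by
    rcases (sqNorm_nonneg u).lt_or_eq with h | h
    · exact h
    · exact absurd (sqNorm_eq_zero_iff.mp h.symm) hu
  set s := sqNorm u with hsdef
  have hsqrt : Real.sqrt s > 0 := Real.sqrt_pos.mpr hs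
  set x : C → ℝ := (Real.sqrt s)⁻¹ • u with hx
  have hxnorm : sqNorm x = 1 := by
    rw [hx, sqNorm_smul, ← hsdef]
    rw [inv_pow, sq, Real.mul_self_sqrt hs.le]
    field_simp
  have hmem : sqNorm (M.mulVec x) ∈
      {r : ℝ | ∃ x : C → ℝ, sqNorm x = 1 ∧ r = sqNorm (M.mulVec x)} := ⟨x, hxnorm, rfl⟩
  have hbdd : BddBelow {r : ℝ | ∃ x : C → ℝ, sqNorm x = 1 ∧ r = sqNorm (M.mulVec x)} :=
    ⟨0, by rintro r ⟨y, -, rfl⟩; exact sqNorm_nonneg _⟩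
  have hle := csInf_le hbdd hmem
  have hMx : sqNorm (M.mulVec x) = s⁻¹ * sqNorm (M.mulVec u) := by
    rw [hx, Matrix.mulVec_smul, sqNorm_smul, inv_pow, sq, Real.mul_self_sqrt hs.le]
  rw [hMx] at hle
  have := mul_le_mul_of_nonneg_right hle hs.le
  calc sigMinSq M * sqNorm u ≤ s⁻¹ * sqNorm (M.mulVec u) * s := this
    _ = sqNorm (M.mulVec u) := by field_simp


lemma exists_unit_sqNorm {ι : Type*} [Fintype ι] {u : ι → ℝ} (hu : u ≠ 0) :
    ∃ x : ι → ℝ, sqNorm x = 1 := by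
  have hs : 0 < sqNorm u := by
    rcases (sqNorm_nonneg u).lt_or_eq with h | h
    · exact h
    · exact absurd (sqNorm_eq_zero_iff.mp h.symm) hu
  refine ⟨(Real.sqrt (sqNorm u))⁻¹ • u, ?_⟩
  rw [sqNorm_smul, inv_pow, sq, Real.mul_self_sqrt hs.le]
  field_simp

lemma mulVec_injective_of_rank {n d : ℕ} (X : Matrix (Fin n) (Fin d) ℝ)
    (hrank : X.rank = d) : Function.Injective X.mulVec := by
  have h1 : Module.finrank ℝ (LinearMap.range X.mulVecLin)
      + Module.finrank ℝ (LinearMap.ker X.mulVecLin) = d := by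
    rw [LinearMap.finrank_range_add_finrank_ker]
    simp [Module.finrank_pi]
  have h2 : Module.finrank ℝ (LinearMap.range X.mulVecLin) = d := hrank
  have h3 : Module.finrank ℝ (LinearMap.ker X.mulVecLin) = 0 := by omega
  have h4 : LinearMap.ker X.mulVecLin = ⊥ := Submodule.finrank_eq_zero.mp h3
  have := LinearMap.ker_eq_bot.mp h4
  exact this

lemma sqNorm_continuous {n d : ℕ} (X : Matrix (Fin n) (Fin d) ℝ) :
    Continuous (fun x : Fin d → ℝ => sqNorm (X.mulVec x)) := by
  simp only [sqNorm, Matrix.mulVec, dotProduct]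
  apply continuous_finset_sum
  intro i _
  exact (continuous_finset_sum _ fun j _ => continuous_const.mul (continuous_apply j)).pow 2

lemma sigMinSq_pos {n d : ℕ} (X : Matrix (Fin n) (Fin d) ℝ) (hrank : X.rank = d)
    {u : Fin d → ℝ} (hu : u ≠ 0) : 0 < sigMinSq X := by
  have hinj := mulVec_injective_of_rank X hrank
  set Sp : Set (Fin d → ℝ) := {x | sqNorm x = 1} with hSp
  have hcn : Continuous (fun x : Fin d → ℝ => sqNorm x) := by
    simpa using sqNorm_continuous (1 : Matrix (Fin d) (Fin d) ℝ)
  have hclosed : IsClosed Sp := isClosed_singleton.preimage hcn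
  have hbounded : Bornology.IsBounded Sp := by
    apply (Metric.isBounded_closedBall (x := (0 : Fin d → ℝ)) (r := 1)).subset
    intro x hx
    simp only [Metric.mem_closedBall, dist_zero_right]
    rw [pi_norm_le_iff_of_nonneg zero_le_one]
    intro i
    have hterm : x i ^ 2 ≤ 1 := by
      have := Finset.single_le_sum (f := fun j => x j ^ 2)
        (fun j _ => sq_nonneg _) (Finset.mem_univ i)
      calc x i ^ 2 ≤ sqNorm x := this
        _ = 1 := hx
    rw [Real.norm_eq_abs]
    nlinarith [abs_nonneg (x i), sq_abs (x i)]
  have hK : IsCompact Sp := Metric.isCompact_of_isClosed_isBounded hclosed hbounded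
  set f : (Fin d → ℝ) → ℝ := fun x => sqNorm (X.mulVec x) with hf
  have hSeq : {r : ℝ | ∃ x : Fin d → ℝ, sqNorm x = 1 ∧ r = sqNorm (X.mulVec x)} = f '' Sp := by
    ext r
    constructor
    · rintro ⟨x, hx1, rfl⟩; exact ⟨x, hx1, rfl⟩
    · rintro ⟨x, hx1, rfl⟩; exact ⟨x, hx1, rfl⟩
  obtain ⟨xu, hxu⟩ := exists_unit_sqNorm hu
  have hne : (f '' Sp).Nonempty := ⟨f xu, xu, hxu, rfl⟩
  have hmem := ((hK.image (sqNorm_continuous X)).sInf_mem hne)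
  rw [sigMinSq, hSeq]
  obtain ⟨x0, hx0, hval⟩ := hmem
  rw [← hval]
  have hx0ne : x0 ≠ 0 := by
    intro h; rw [hSp] at hx0; simp only [Set.mem_setOf_eq, h] at hx0
    rw [sqNorm_eq_zero_iff.mpr rfl] at hx0; norm_num at hx0
  have hMx0 : X.mulVec x0 ≠ 0 := by
    intro h
    apply hx0ne
    apply hinj
    rw [h, Matrix.mulVec_zero]
  rcases (sqNorm_nonneg (X.mulVec x0)).lt_or_eq with h | h
  · exact h
  · exact absurd (sqNorm_eq_zero_iff.mp h.symm) hMx0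


lemma dotR_comm {ι : Type*} [Fintype ι] (v w : ι → ℝ) : dotR v w = dotR w v := by
  simp [dotR, mul_comm]

lemma sqNorm_eq_dotR {ι : Type*} [Fintype ι] (v : ι → ℝ) : sqNorm v = dotR v v := by
  simp [sqNorm, dotR, sq]

lemma dotR_add_left {ι : Type*} [Fintype ι] (a b c : ι → ℝ) :
    dotR (a + b) c = dotR a c + dotR b c := by
  simp [dotR, add_mul, Finset.sum_add_distrib]

lemma sqNorm_neg {ι : Type*} [Fintype ι] (v : ι → ℝ) : sqNorm (-v) = sqNorm v := by
  simp [sqNorm]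


/-- Bound on the distance between the original and the sketched least squares
minimizers: `‖γ − ν‖² ≤ (ε²/σ_min(X)²)·‖Xγ − Y‖²`. -/
theorem sketched_least_squares_mean_bound {n d k : ℕ} {ε : ℝ} (hε : 0 < ε) (hε' : ε ≤ 1 / 2)
    (X : Matrix (Fin n) (Fin d) ℝ) (hrank : X.rank = d) (Y : Fin n → ℝ)
    (P : Matrix (Fin k) (Fin n) ℝ)
    (hP : IsSubspaceEmbedding P (augment X Y) (ε / 3))
    (γ ν : Fin d → ℝ)
    (hγ : ∀ β : Fin d → ℝ, sqNorm (X.mulVec γ - Y) ≤ sqNorm (X.mulVec β - Y))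
    (hν : ∀ β : Fin d → ℝ,
      sqNorm (P.mulVec (X.mulVec ν - Y)) ≤ sqNorm (P.mulVec (X.mulVec β - Y))) :
    sqNorm (γ - ν) ≤ ε ^ 2 / sigMinSq X * sqNorm (X.mulVec γ - Y) := by
  set r : Fin n → ℝ := X.mulVec γ - Y with hr
  set w : Fin n → ℝ := X.mulVec ν - X.mulVec γ with hw
  have hR0 : 0 ≤ sqNorm r := sqNorm_nonneg _
  have hW0 : 0 ≤ sqNorm w := sqNorm_nonneg _
  -- normal equations for the original problem
  have hNE : ∀ u : Fin d → ℝ, dotR r (X.mulVec u) = 0 := by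
    intro u
    have key : ∀ t : ℝ,
        0 ≤ sqNorm (X.mulVec u) * t^2 + (2 * dotR r (X.mulVec u)) * t := by
      intro t
      have h1 := hγ (γ + t • u)
      have h2 : X.mulVec (γ + t • u) - Y = (1:ℝ) • r + t • X.mulVec u := by
        rw [Matrix.mulVec_add, Matrix.mulVec_smul, hr, one_smul]
        abel
      rw [h2, sqNorm_expand] at h1
      nlinarith [h1]
    have := quad_lin_zero (sqNorm_nonneg (X.mulVec u)) key
    linarith
  -- normal equations for the sketched problem
  have hNEs : ∀ u : Fin d → ℝ,
      dotR (P.mulVec (X.mulVec ν - Y)) (P.mulVec (X.mulVec u)) = 0 := by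
    intro u
    have key : ∀ t : ℝ,
        0 ≤ sqNorm (P.mulVec (X.mulVec u)) * t^2 +
          (2 * dotR (P.mulVec (X.mulVec ν - Y)) (P.mulVec (X.mulVec u))) * t := by
      intro t
      have h1 := hν (ν + t • u)
      have h2' : X.mulVec (ν + t • u) - Y = (X.mulVec ν - Y) + t • X.mulVec u := by
        rw [Matrix.mulVec_add, Matrix.mulVec_smul]; abel
      have h2 : P.mulVec (X.mulVec (ν + t • u) - Y) =
          (1:ℝ) • P.mulVec (X.mulVec ν - Y) + t • P.mulVec (X.mulVec u) := by
        rw [h2', Matrix.mulVec_add, Matrix.mulVec_smul, one_smul]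
      rw [h2, sqNorm_expand] at h1
      nlinarith [h1]
    have := quad_lin_zero (sqNorm_nonneg (P.mulVec (X.mulVec u))) key
    linarith
  have hweq : X.mulVec (ν - γ) = w := by rw [Matrix.mulVec_sub, hw]
  -- orthogonality of w and r
  have hwr : dotR w r = 0 := by
    rw [dotR_comm, ← hweq]; exact hNE (ν - γ)
  -- orthogonality in the sketch
  have hXνY : X.mulVec ν - Y = w + r := by rw [hw, hr]; abel
  have hPwr : dotR (P.mulVec w) (P.mulVec r) = -sqNorm (P.mulVec w) := by
    have h := hNEs (ν - γ)
    rw [hweq, hXνY, Matrix.mulVec_add, dotR_add_left, dotR_comm (P.mulVec r)] at h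
    rw [sqNorm_eq_dotR]
    linarith
  -- subspace-embedding bounds for w, w + ε r, w - ε r
  have hmulPA : ∀ x : Fin (d+1) → ℝ,
      (P * augment X Y).mulVec x = P.mulVec ((augment X Y).mulVec x) :=
    fun x => (Matrix.mulVec_mulVec x P (augment X Y)).symm
  have hA0 : (augment X Y).mulVec (Fin.snoc (ν - γ) 0) = w := by
    rw [augment_mulVec, hweq, zero_smul, add_zero]
  have hA1 : (augment X Y).mulVec (Fin.snoc ((ν - γ) + ε • γ) (-ε)) = w + ε • r := by
    rw [augment_mulVec, Matrix.mulVec_add, Matrix.mulVec_smul, hweq, hr]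
    funext i; simp; ring
  have hA2 : (augment X Y).mulVec (Fin.snoc ((ν - γ) - ε • γ) ε) = w - ε • r := by
    rw [augment_mulVec, Matrix.mulVec_sub, Matrix.mulVec_smul, hweq, hr]
    funext i; simp; ring
  have e0 : (1 - ε/3) * sqNorm w ≤ sqNorm (P.mulVec w) := by
    have := (hP (Fin.snoc (ν - γ) 0)).1
    rwa [hmulPA, hA0] at this
  have e1 : (1 - ε/3) * sqNorm (w + ε • r) ≤ sqNorm (P.mulVec (w + ε • r)) := by
    have := (hP (Fin.snoc ((ν - γ) + ε • γ) (-ε))).1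
    rwa [hmulPA, hA1] at this
  have e2 : sqNorm (P.mulVec (w - ε • r)) ≤ (1 + ε/3) * sqNorm (w - ε • r) := by
    have := (hP (Fin.snoc ((ν - γ) - ε • γ) ε)).2
    rwa [hmulPA, hA2] at this
  -- expand all squared norms
  have hplus : sqNorm (w + ε • r) = sqNorm w + ε^2 * sqNorm r := by
    have h : w + ε • r = (1:ℝ) • w + ε • r := by rw [one_smul]
    rw [h, sqNorm_expand, hwr]; ring
  have hminus : sqNorm (w - ε • r) = sqNorm w + ε^2 * sqNorm r := by
    have h : w - ε • r = (1:ℝ) • w + (-ε) • r := by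
      rw [one_smul, neg_smul]; abel
    rw [h, sqNorm_expand, hwr]; ring
  have hPplus : sqNorm (P.mulVec (w + ε • r)) =
      sqNorm (P.mulVec w) + 2 * ε * dotR (P.mulVec w) (P.mulVec r)
        + ε^2 * sqNorm (P.mulVec r) := by
    have h : P.mulVec (w + ε • r) = (1:ℝ) • P.mulVec w + ε • P.mulVec r := by
      rw [Matrix.mulVec_add, Matrix.mulVec_smul, one_smul]
    rw [h, sqNorm_expand]; ring
  have hPminus : sqNorm (P.mulVec (w - ε • r)) =
      sqNorm (P.mulVec w) - 2 * ε * dotR (P.mulVec w) (P.mulVec r)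
        + ε^2 * sqNorm (P.mulVec r) := by
    have h : P.mulVec (w - ε • r) = (1:ℝ) • P.mulVec w + (-ε) • P.mulVec r := by
      rw [Matrix.mulVec_sub, Matrix.mulVec_smul, one_smul, neg_smul]; abel
    rw [h, sqNorm_expand]; ring
  rw [hplus, hPplus, hPwr] at e1
  rw [hminus, hPminus, hPwr] at e2
  -- key bound: ‖w‖² ≤ ε² ‖r‖²
  have hmul : ε * (4 * (1 - ε/3) * sqNorm w) ≤
      ε * ((2/3) * (sqNorm w + ε^2 * sqNorm r)) := by
    nlinarith [mul_le_mul_of_nonneg_left e0 hε.le, e1, e2]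
  have hkey : sqNorm w ≤ ε^2 * sqNorm r := by
    have h6 := le_of_mul_le_mul_left hmul hε
    nlinarith [hW0, hR0, sq_nonneg ε]
  -- conclude using the smallest singular value
  by_cases hgn : γ - ν = 0
  · rw [hgn, sqNorm_eq_zero_iff.mpr rfl]
    exact mul_nonneg (div_nonneg (sq_nonneg ε) (sigMinSq_nonneg X)) hR0
  · have hσ : 0 < sigMinSq X := sigMinSq_pos X hrank hgn
    have hXgn : X.mulVec (γ - ν) = -w := by
      rw [Matrix.mulVec_sub, hw]; abel
    have hσle := sigMinSq_le X hgn
    rw [hXgn, sqNorm_neg] at hσle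
    have hs : sigMinSq X * sqNorm (γ - ν) ≤ ε^2 * sqNorm r := le_trans hσle hkey
    rw [div_mul_eq_mul_div, le_div_iff₀ hσ]
    calc sqNorm (γ - ν) * sigMinSq X = sigMinSq X * sqNorm (γ - ν) := by ring
      _ ≤ ε^2 * sqNorm r := hs
end
end

section
/- Let 0 < ε ≤ 1/2, let X ∈ ℝ^{n×d} have full column rank d, and let Π ∈ ℝ^{k×n} be an (ε/3)-subspace embedding for the column space of X. Then trace((XᵀΠᵀΠX)⁻¹) ≤ (1+ε) · trace((XᵀX)⁻¹). -/
open Matrix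

noncomputable section

lemma sqNorm_pos {ι : Type*} [Fintype ι] {v : ι → ℝ} (hv : v ≠ 0) : 0 < sqNorm v := by
  obtain ⟨i, hi⟩ := Function.ne_iff.mp hv
  exact Finset.sum_pos' (fun j _ => sq_nonneg _)
    ⟨i, Finset.mem_univ i, by simpa using sq_pos_of_ne_zero hi⟩

lemma dot_eq_sqNorm {a b : Type*} [Fintype a] [Fintype b] (A : Matrix a b ℝ) (x : b → ℝ) :
    x ⬝ᵥ ((Aᵀ * A) *ᵥ x) = sqNorm (A *ᵥ x) := by
  rw [← mulVec_mulVec, dotProduct_mulVec, vecMul_transpose, sqNorm]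
  simp [dotProduct, sq]

lemma psd_smul {d : ℕ} {A : Matrix (Fin d) (Fin d) ℝ} (hA : A.PosSemidef) {c : ℝ}
    (hc : 0 ≤ c) : (c • A).PosSemidef := by
  refine .of_dotProduct_mulVec_nonneg (by rw [IsHermitian, conjTranspose_smul, star_trivial, hA.1.eq]) fun x => ?_
  rw [smul_mulVec, dotProduct_smul]
  exact smul_nonneg hc (hA.dotProduct_mulVec_nonneg x)

lemma trace_nonneg_of_psd {d : ℕ} {A : Matrix (Fin d) (Fin d) ℝ} (hA : A.PosSemidef) :
    0 ≤ A.trace := by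
  rw [Matrix.trace]
  refine Finset.sum_nonneg fun i _ => ?_
  have := hA.dotProduct_mulVec_nonneg (Pi.single i 1)
  simpa [dotProduct, mulVec, Pi.single_apply, Finset.sum_ite_eq, diag] using this

open scoped MatrixOrder in
lemma trace_inv_le_of_le {d : ℕ} {M N : Matrix (Fin d) (Fin d) ℝ} {c : ℝ} (hc : 0 < c)
    (hM : M.PosDef) (hN : N.PosDef) (h : (N - c • M).PosSemidef) :
    N⁻¹.trace ≤ c⁻¹ * M⁻¹.trace := by
  have hNpsd := hN.posSemidef
  set S := CFC.sqrt N with hSdef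
  have hSS : S * S = N := CFC.sqrt_mul_sqrt_self N hNpsd.nonneg
  have hSherm : S.IsHermitian := (CFC.sqrt_nonneg N).posSemidef.1
  clear_value S
  clear hSdef
  have hSdet : IsUnit S.det := by
    have h2 : S.det * S.det = N.det := by rw [← det_mul, hSS]
    have hNd : N.det ≠ 0 := ne_of_gt hN.det_pos
    exact isUnit_iff_ne_zero.mpr (fun h0 => hNd (by rw [← h2, h0, zero_mul]))
  have hS1 : S * S⁻¹ = 1 := mul_nonsing_inv S hSdet
  have hS2 : S⁻¹ * S = 1 := nonsing_inv_mul S hSdet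
  have hSinvherm : (S⁻¹)ᴴ = S⁻¹ := by
    rw [conjTranspose_nonsing_inv, hSherm.eq]
  have hMdet : IsUnit M.det := hM.det_pos.ne'.isUnit
  have hM1 : M * M⁻¹ = 1 := mul_nonsing_inv M hMdet
  have hM2 : M⁻¹ * M = 1 := nonsing_inv_mul M hMdet
  -- A and its explicit inverse
  set A : Matrix (Fin d) (Fin d) ℝ := c⁻¹ • (S * M⁻¹ * S) with hAdef
  set Ai : Matrix (Fin d) (Fin d) ℝ := c • (S⁻¹ * M * S⁻¹) with hAidef
  have hAAi : A * Ai = 1 := by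
    rw [hAdef, hAidef, Matrix.smul_mul, Matrix.mul_smul, smul_smul, inv_mul_cancel₀ hc.ne', one_smul]
    calc S * M⁻¹ * S * (S⁻¹ * M * S⁻¹)
        = S * M⁻¹ * (S * S⁻¹) * M * S⁻¹ := by noncomm_ring
      _ = 1 := by rw [hS1, mul_one, Matrix.mul_assoc S M⁻¹ M, hM2, mul_one, hS1]
  have hAiA : Ai * A = 1 := by
    rw [hAdef, hAidef, Matrix.smul_mul, Matrix.mul_smul, smul_smul, mul_inv_cancel₀ hc.ne', one_smul]
    calc S⁻¹ * M * S⁻¹ * (S * M⁻¹ * S)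
        = S⁻¹ * M * (S⁻¹ * S) * M⁻¹ * S := by noncomm_ring
      _ = 1 := by rw [hS2, mul_one, Matrix.mul_assoc _ M M⁻¹, hM1, mul_one, hS2]
  -- A is PSD
  have hApsd : A.PosSemidef := by
    have := (hM.posSemidef.inv).conjTranspose_mul_mul_same S
    rw [hSherm.eq] at this
    exact psd_smul this (by positivity)
  -- 1 - Ai is PSD
  have hkey : S⁻¹ * (N - c • M) * S⁻¹ = 1 - Ai := by
    rw [Matrix.mul_sub, Matrix.sub_mul]
    congr 1
    · calc S⁻¹ * N * S⁻¹ = (S⁻¹ * S) * (S * S⁻¹) := by rw [← hSS]; noncomm_ring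
        _ = 1 := by rw [hS2, hS1, Matrix.one_mul]
    · rw [hAidef, Matrix.mul_smul, Matrix.smul_mul]
  have h1Ai : (1 - Ai).PosSemidef := by
    have := h.conjTranspose_mul_mul_same S⁻¹
    rwa [hSinvherm, hkey] at this
  -- square root of A
  set T := CFC.sqrt A with hTdef
  have hTT : T * T = A := CFC.sqrt_mul_sqrt_self A hApsd.nonneg
  have hTherm : T.IsHermitian := (CFC.sqrt_nonneg A).posSemidef.1
  clear_value T
  clear hTdef
  have hTA : T * A = A * T := by rw [← hTT]; noncomm_ring
  have hTAi : T * Ai = Ai * T := by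
    calc T * Ai = (Ai * A) * (T * Ai) := by rw [hAiA, Matrix.one_mul]
      _ = Ai * ((A * T) * Ai) := by noncomm_ring
      _ = Ai * ((T * A) * Ai) := by rw [hTA]
      _ = Ai * (T * (A * Ai)) := by noncomm_ring
      _ = Ai * T := by rw [hAAi, Matrix.mul_one]
  have hTAiT : T * Ai * T = 1 := by
    rw [hTAi, Matrix.mul_assoc, hTT, hAiA]
  -- A - 1 is PSD
  have hA1 : (A - 1).PosSemidef := by
    have := h1Ai.conjTranspose_mul_mul_same T
    rwa [hTherm.eq, Matrix.mul_sub, Matrix.sub_mul, Matrix.mul_one,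
      hTAiT, hTT] at this
  -- transfer back
  have hNinv : N⁻¹ = S⁻¹ * S⁻¹ := by rw [← hSS, Matrix.mul_inv_rev]
  have hfin : (c⁻¹ • M⁻¹ - N⁻¹).PosSemidef := by
    have := hA1.conjTranspose_mul_mul_same S⁻¹
    rw [hSinvherm] at this
    have heq : S⁻¹ * (A - 1) * S⁻¹ = c⁻¹ • M⁻¹ - N⁻¹ := by
      rw [Matrix.mul_sub, Matrix.sub_mul, Matrix.mul_one, hNinv]
      congr 1
      rw [hAdef, Matrix.mul_smul, Matrix.smul_mul]
      congr 1
      calc S⁻¹ * (S * M⁻¹ * S) * S⁻¹ = (S⁻¹ * S) * M⁻¹ * (S * S⁻¹) := by noncomm_ring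
        _ = M⁻¹ := by rw [hS2, hS1, Matrix.one_mul, Matrix.mul_one]
    rwa [heq] at this
  have := trace_nonneg_of_psd hfin
  rw [trace_sub, trace_smul, smul_eq_mul] at this
  linarith

/-- If `Π` is an `(ε/3)`-subspace embedding for the column space of the full column
rank matrix `X`, then `trace((XᵀΠᵀΠX)⁻¹) ≤ (1+ε)·trace((XᵀX)⁻¹)`. -/
theorem trace_inverse_bound {n d k : ℕ} {ε : ℝ} (hε : 0 < ε) (hε' : ε ≤ 1 / 2)
    (X : Matrix (Fin n) (Fin d) ℝ) (hrank : X.rank = d)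
    (P : Matrix (Fin k) (Fin n) ℝ) (hP : IsSubspaceEmbedding P X (ε / 3)) :
    ((Xᵀ * Pᵀ * P * X)⁻¹).trace ≤ (1 + ε) * ((Xᵀ * X)⁻¹).trace := by
  classical
  -- injectivity of `X`
  have hker : LinearMap.ker X.mulVecLin = ⊥ := by
    have h1 := LinearMap.finrank_range_add_finrank_ker X.mulVecLin
    rw [show Module.finrank ℝ (Fin d → ℝ) = d by simp] at h1
    rw [show Module.finrank ℝ ↥(LinearMap.range X.mulVecLin) = X.rank from rfl, hrank] at h1
    exact Submodule.finrank_eq_zero.mp (by omega)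
  have hXinj : ∀ x : Fin d → ℝ, x ≠ 0 → X *ᵥ x ≠ 0 := by
    intro x hx h0
    have : x ∈ LinearMap.ker X.mulVecLin := by simpa using h0
    rw [hker, Submodule.mem_bot] at this
    exact hx this
  set c : ℝ := 1 - ε / 3 with hcdef
  have hc : 0 < c := by rw [hcdef]; linarith
  have hNeq : Xᵀ * Pᵀ * P * X = (P * X)ᵀ * (P * X) := by
    rw [Matrix.transpose_mul, Matrix.mul_assoc]
  have hstar : ∀ x : Fin d → ℝ, star x = x := fun x => by simp
  -- `XᵀX` is positive definite
  have hMpd : (Xᵀ * X).PosDef := by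
    refine .of_dotProduct_mulVec_pos ?_ fun x hx => ?_
    · rw [IsHermitian, conjTranspose_eq_transpose_of_trivial, Matrix.transpose_mul,
        transpose_transpose]
    · rw [hstar, dot_eq_sqNorm]
      exact sqNorm_pos (hXinj x hx)
  -- `XᵀΠᵀΠX` is positive definite
  have hNpd : (Xᵀ * Pᵀ * P * X).PosDef := by
    refine .of_dotProduct_mulVec_pos ?_ fun x hx => ?_
    · rw [IsHermitian, conjTranspose_eq_transpose_of_trivial, hNeq, Matrix.transpose_mul,
        transpose_transpose]
    · rw [hstar, hNeq, dot_eq_sqNorm]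
      have h1 := (hP x).1
      have h2 : 0 < sqNorm (X *ᵥ x) := sqNorm_pos (hXinj x hx)
      have h3 : (0:ℝ) < 1 - ε / 3 := hc
      calc (0:ℝ) < (1 - ε / 3) * sqNorm (X.mulVec x) := by positivity
        _ ≤ sqNorm ((P * X).mulVec x) := h1
  -- the Loewner inequality `XᵀΠᵀΠX - c • XᵀX ⪰ 0`
  have hsub : (Xᵀ * Pᵀ * P * X - c • (Xᵀ * X)).PosSemidef := by
    refine .of_dotProduct_mulVec_nonneg (hNpd.1.sub ?_) fun x => ?_
    · rw [IsHermitian, conjTranspose_smul, hMpd.1.eq]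
      simp
    · rw [hstar, sub_mulVec, dotProduct_sub, smul_mulVec, dotProduct_smul,
        hNeq, dot_eq_sqNorm, dot_eq_sqNorm, smul_eq_mul]
      have := (hP x).1
      rw [hcdef]
      linarith
  have key := trace_inv_le_of_le hc hMpd hNpd hsub
  have htr : 0 ≤ ((Xᵀ * X)⁻¹).trace := trace_nonneg_of_psd hMpd.posSemidef.inv
  have hcinv : c⁻¹ ≤ 1 + ε := by
    rw [inv_eq_one_div, div_le_iff₀ hc, hcdef]
    nlinarith
  calc ((Xᵀ * Pᵀ * P * X)⁻¹).trace ≤ c⁻¹ * ((Xᵀ * X)⁻¹).trace := key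
    _ ≤ (1 + ε) * ((Xᵀ * X)⁻¹).trace := mul_le_mul_of_nonneg_right hcinv htr
end
end
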